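/- Let f : (0,1) → [0,∞) be convex, symmetric in the sense that f(1−x) = f(x) for all x ∈ (0,1), and Lebesgue integrable on (0,1). Then for every integer k ≥ 2: (1/2)·f(1/2) ≤ (1/k)·Σ_{ℓ=1}^{k−1} f(ℓ/k) ≤ ∫₀¹ f(u) du; moreover lim_{k→∞} (1/k)·Σ_{ℓ=1}^{k−1} f(ℓ/k) = ∫₀¹ f(u) du, and the minimum over integers k ≥ 2 of (1/k)·Σ_{ℓ=1}^{k−1} f(ℓ/k) equals (1/2)·f(1/2), attained at k = 2. -/

import Mathlib

open MeasureTheory Finset Filter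

lemma leftHH (f : ℝ → ℝ) (hconv : ConvexOn ℝ (Set.Ioo (0:ℝ) 1) f)
    (hint : IntegrableOn f (Set.Ioo (0:ℝ) 1)) {a b : ℝ} (h0 : 0 < a) (hab : a < b) (hb1 : b < 1) :
    f ((a+b)/2) * (b - a) ≤ ∫ x in Set.Ioo a b, f x := by
  have hsub : Set.Icc a b ⊆ Set.Ioo (0:ℝ) 1 :=
    (Set.Icc_subset_Ioo h0 hb1)
  have hconv' : ConvexOn ℝ (Set.Icc a b) f := hconv.subset hsub (convex_Icc a b)
  have hcont : ContinuousOn f (Set.Icc a b) :=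
    (hconv.continuousOn isOpen_Ioo).mono hsub
  haveI : NeZero (volume.restrict (Set.Ioo a b)) :=
    ⟨by simp [Measure.restrict_eq_zero, Set.Ioo_eq_empty_iff, hab]⟩
  have hfs : ∀ᵐ x ∂(volume.restrict (Set.Ioo a b)), x ∈ Set.Icc a b :=
    (ae_restrict_iff' measurableSet_Ioo).2 (ae_of_all _ fun x hx => Set.Ioo_subset_Icc_self hx)
  have hfi : Integrable (fun x : ℝ => x) (volume.restrict (Set.Ioo a b)) :=
    (intervalIntegrable_iff_integrableOn_Ioo_of_le hab.le).1 intervalIntegral.intervalIntegrable_id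
  have hgi : Integrable (f ∘ fun x : ℝ => x) (volume.restrict (Set.Ioo a b)) :=
    hint.mono_set (Set.Ioo_subset_Ioo h0.le hb1.le) |>.congr (by rfl)
  have key := hconv'.map_average_le hcont isClosed_Icc hfs hfi hgi
  have hvol : (volume (Set.Ioo a b)).toReal = b - a := by
    rw [Real.volume_Ioo, ENNReal.toReal_ofReal (by linarith)]
  have havg : (⨍ x in Set.Ioo a b, x) = (a+b)/2 := by
    rw [setAverage_eq, measureReal_def, hvol]
    rw [show (∫ x in Set.Ioo a b, x) = (b^2 - a^2)/2 by
      rw [← integral_Ioc_eq_integral_Ioo, ← intervalIntegral.integral_of_le hab.le, integral_id]]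
    have hba : b - a ≠ 0 := by linarith
    rw [smul_eq_mul]
    field_simp
    ring
  rw [havg] at key
  have h2 : (⨍ x in Set.Ioo a b, f x) = (∫ x in Set.Ioo a b, f x) / (b - a) := by
    rw [setAverage_eq, measureReal_def, hvol, smul_eq_mul]; ring
  rw [h2] at key
  have hba : 0 < b - a := by linarith
  calc f ((a+b)/2) * (b-a) ≤ ((∫ x in Set.Ioo a b, f x) / (b-a)) * (b-a) := by
        exact mul_le_mul_of_nonneg_right key hba.le
    _ = ∫ x in Set.Ioo a b, f x := by field_simp

lemma rightHH (f : ℝ → ℝ) (hconv : ConvexOn ℝ (Set.Ioo (0:ℝ) 1) f)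
    (hint : IntegrableOn f (Set.Ioo (0:ℝ) 1)) {a b : ℝ} (h0 : 0 < a) (hab : a < b) (hb1 : b < 1) :
    ∫ x in Set.Ioo a b, f x ≤ (f a + f b) / 2 * (b - a) := by
  have hba : (0:ℝ) < b - a := by linarith
  have hba' : b - a ≠ 0 := hba.ne'
  set g : ℝ → ℝ := fun x => (b * f a - a * f b) / (b - a) + ((f b - f a) / (b - a)) * x with hg
  have hpt : ∀ x ∈ Set.Ioo a b, f x ≤ g x := by
    intro x hx
    have ha' : a ∈ Set.Ioo (0:ℝ) 1 := ⟨h0, by linarith [hx.1, hx.2]⟩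
    have hb' : b ∈ Set.Ioo (0:ℝ) 1 := ⟨by linarith [hx.1], hb1⟩
    have ht1 : (0:ℝ) ≤ (b - x) / (b - a) := by
      apply div_nonneg (by linarith [hx.2]) hba.le
    have ht2 : (0:ℝ) ≤ (x - a) / (b - a) := by
      apply div_nonneg (by linarith [hx.1]) hba.le
    have hsum : (b - x) / (b - a) + (x - a) / (b - a) = 1 := by
      rw [← add_div, div_eq_one_iff_eq hba']; ring
    have key := hconv.2 ha' hb' ht1 ht2 hsum
    have hxeq : ((b - x) / (b - a)) • a + ((x - a) / (b - a)) • b = x := by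
      rw [smul_eq_mul, smul_eq_mul, div_mul_eq_mul_div, div_mul_eq_mul_div, ← add_div,
        div_eq_iff hba']
      ring
    rw [hxeq] at key
    calc f x ≤ (b - x) / (b - a) * f a + (x - a) / (b - a) * f b := key
      _ = g x := by rw [hg]; field_simp; ring
  have hfi : IntegrableOn f (Set.Ioo a b) :=
    hint.mono_set (Set.Ioo_subset_Ioo h0.le hb1.le)
  have hgc : Continuous g := by fun_prop
  have hgi : IntegrableOn g (Set.Ioo a b) :=
    (intervalIntegrable_iff_integrableOn_Ioo_of_le hab.le).1 (hgc.intervalIntegrable a b)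
  have hmono := setIntegral_mono_on hfi hgi measurableSet_Ioo hpt
  refine hmono.trans (le_of_eq ?_)
  rw [← integral_Ioc_eq_integral_Ioo, ← intervalIntegral.integral_of_le hab.le]
  rw [hg]
  rw [intervalIntegral.integral_add (intervalIntegrable_const)
    ((intervalIntegral.intervalIntegrable_id).const_mul _),
    intervalIntegral.integral_const, intervalIntegral.integral_const_mul, integral_id]
  rw [smul_eq_mul]
  field_simp
  ring

lemma half_le (f : ℝ → ℝ) (hconv : ConvexOn ℝ (Set.Ioo (0:ℝ) 1) f)
    (hsym : ∀ x ∈ Set.Ioo (0:ℝ) 1, f (1 - x) = f x) {x : ℝ} (hx : x ∈ Set.Ioo (0:ℝ) 1) :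
    f (1/2) ≤ f x := by
  have hx' : (1 - x) ∈ Set.Ioo (0:ℝ) 1 := ⟨by linarith [hx.2], by linarith [hx.1]⟩
  have key := hconv.2 hx hx' (by norm_num : (0:ℝ) ≤ 1/2) (by norm_num : (0:ℝ) ≤ 1/2) (by norm_num)
  have hmid : (1/2 : ℝ) • x + (1/2 : ℝ) • (1 - x) = 1/2 := by
    simp [smul_eq_mul]; ring
  rw [hmid, hsym x hx] at key
  simp only [smul_eq_mul] at key
  linarith

lemma mem01 {k ℓ : ℕ} (hk : 2 ≤ k) (hℓ : ℓ ∈ Finset.Ico 1 k) :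
    (ℓ:ℝ)/(k:ℝ) ∈ Set.Ioo (0:ℝ) 1 := by
  have h1 : 1 ≤ ℓ := (Finset.mem_Ico.1 hℓ).1
  have h2 : ℓ < k := (Finset.mem_Ico.1 hℓ).2
  have hk0 : (0:ℝ) < k := by exact_mod_cast (by omega : 0 < k)
  constructor
  · apply div_pos (by exact_mod_cast h1) hk0
  · rw [div_lt_one hk0]; exact_mod_cast h2

lemma lowerR (f : ℝ → ℝ) (hconv : ConvexOn ℝ (Set.Ioo (0:ℝ) 1) f)
    (hnonneg : ∀ x ∈ Set.Ioo (0:ℝ) 1, 0 ≤ f x)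
    (hsym : ∀ x ∈ Set.Ioo (0:ℝ) 1, f (1 - x) = f x) (k : ℕ) (hk : 2 ≤ k) :
    (1/2) * f (1/2) ≤ (1/(k:ℝ)) * ∑ ℓ ∈ Finset.Ico 1 k, f ((ℓ:ℝ)/(k:ℝ)) := by
  have hk0 : (0:ℝ) < k := by exact_mod_cast (by omega : 0 < k)
  have hhalf : (1/2:ℝ) ∈ Set.Ioo (0:ℝ) 1 := by norm_num
  have hbound : ((k:ℝ) - 1) * f (1/2) ≤ ∑ ℓ ∈ Finset.Ico 1 k, f ((ℓ:ℝ)/(k:ℝ)) := by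
    have := Finset.sum_le_sum (fun ℓ hℓ => half_le f hconv hsym (mem01 hk hℓ))
    have hcard : (Finset.Ico 1 k).card = k - 1 := Nat.card_Ico 1 k
    rw [Finset.sum_const, hcard] at this
    have h2 : ((k-1 : ℕ):ℝ) * f (1/2) ≤ ∑ ℓ ∈ Finset.Ico 1 k, f ((ℓ:ℝ)/(k:ℝ)) := by
      rw [← nsmul_eq_mul]; exact this
    calc ((k:ℝ) - 1) * f (1/2) = ((k-1:ℕ):ℝ) * f (1/2) := by
          rw [Nat.cast_sub (by omega)]; norm_num
      _ ≤ _ := h2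
  have hf0 : 0 ≤ f (1/2) := hnonneg _ hhalf
  have h2k : (2:ℝ) ≤ k := by exact_mod_cast hk
  rw [show (1/(k:ℝ)) * ∑ ℓ ∈ Finset.Ico 1 k, f ((ℓ:ℝ)/(k:ℝ))
      = (∑ ℓ ∈ Finset.Ico 1 k, f ((ℓ:ℝ)/(k:ℝ))) / k by ring, le_div_iff₀ hk0]
  calc (1/2) * f (1/2) * k = (k/2) * f (1/2) := by ring
    _ ≤ ((k:ℝ) - 1) * f (1/2) := by
        apply mul_le_mul_of_nonneg_right _ hf0
        linarith
    _ ≤ _ := hbound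


lemma upperR (f : ℝ → ℝ) (hconv : ConvexOn ℝ (Set.Ioo (0:ℝ) 1) f)
    (hnonneg : ∀ x ∈ Set.Ioo (0:ℝ) 1, 0 ≤ f x)
    (hint : IntegrableOn f (Set.Ioo (0:ℝ) 1)) (k : ℕ) (hk : 2 ≤ k) :
    (1/(k:ℝ)) * ∑ ℓ ∈ Finset.Ico 1 k, f ((ℓ:ℝ)/(k:ℝ)) ≤ ∫ u in Set.Ioo (0:ℝ) 1, f u := by
  have hk0 : (0:ℝ) < k := by exact_mod_cast (by omega : 0 < k)
  set I : ℕ → Set ℝ := fun ℓ => Set.Ioo ((2*(ℓ:ℝ)-1)/(2*k)) ((2*(ℓ:ℝ)+1)/(2*k)) with hI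
  have hIsub : ∀ ℓ ∈ Finset.Ico 1 k, I ℓ ⊆ Set.Ioo (0:ℝ) 1 := by
    intro ℓ hℓ
    obtain ⟨h1, h2⟩ := Finset.mem_Ico.1 hℓ
    have h1' : (1:ℝ) ≤ ℓ := by exact_mod_cast h1
    have h2' : (ℓ:ℝ) + 1 ≤ k := by exact_mod_cast h2
    apply Set.Ioo_subset_Ioo
    · exact div_nonneg (by linarith) (by positivity)
    · rw [div_le_one (by positivity)]; linarith
  have hstep : ∀ ℓ ∈ Finset.Ico 1 k, (1/(k:ℝ)) * f ((ℓ:ℝ)/(k:ℝ)) ≤ ∫ x in I ℓ, f x := by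
    intro ℓ hℓ
    obtain ⟨h1, h2⟩ := Finset.mem_Ico.1 hℓ
    have h1' : (1:ℝ) ≤ ℓ := by exact_mod_cast h1
    have h2' : (ℓ:ℝ) + 1 ≤ k := by exact_mod_cast h2
    have h0 : (0:ℝ) < (2*(ℓ:ℝ)-1)/(2*k) := div_pos (by linarith) (by positivity)
    have hab : (2*(ℓ:ℝ)-1)/(2*k) < (2*(ℓ:ℝ)+1)/(2*k) :=
      (div_lt_div_iff_of_pos_right (by positivity)).2 (by linarith)
    have hb1 : (2*(ℓ:ℝ)+1)/(2*k) < 1 := by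
      rw [div_lt_one (by positivity)]; linarith
    have key := leftHH f hconv hint h0 hab hb1
    have e1 : ((2*(ℓ:ℝ)-1)/(2*k) + (2*(ℓ:ℝ)+1)/(2*k))/2 = (ℓ:ℝ)/k := by
      field_simp; ring
    have e2 : (2*(ℓ:ℝ)+1)/(2*k) - (2*(ℓ:ℝ)-1)/(2*k) = 1/k := by
      rw [div_sub_div_same, show (2*(ℓ:ℝ)+1) - (2*(ℓ:ℝ)-1) = 2 by ring]
      rw [show (2:ℝ)*k = 2*k by ring, div_eq_div_iff (by positivity) hk0.ne']
      ring
    rw [e1, e2] at key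
    rw [mul_comm]
    exact key
  have hmeas : ∀ ℓ ∈ Finset.Ico 1 k, MeasurableSet (I ℓ) := fun ℓ _ => measurableSet_Ioo
  have hdisj : Set.Pairwise ↑(Finset.Ico 1 k) (Function.onFun Disjoint I) := by
    intro i hi j hj hij
    have key : ∀ i j : ℕ, i < j → Disjoint (I i) (I j) := by
      intro i j hlt
      rw [hI]
      apply Set.Ioo_disjoint_Ioo.2
      have : (2*(i:ℝ)+1)/(2*k) ≤ (2*(j:ℝ)-1)/(2*k) := by
        apply div_le_div_of_nonneg_right ?_ (by positivity) |>.trans_eq rfl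
        have : (i:ℝ) + 1 ≤ j := by exact_mod_cast hlt
        linarith
      calc min ((2*(i:ℝ)+1)/(2*k)) ((2*(j:ℝ)+1)/(2*k)) ≤ (2*(i:ℝ)+1)/(2*k) := min_le_left _ _
        _ ≤ (2*(j:ℝ)-1)/(2*k) := this
        _ ≤ max ((2*(i:ℝ)-1)/(2*k)) ((2*(j:ℝ)-1)/(2*k)) := le_max_right _ _
    rcases lt_or_gt_of_ne hij with h | h
    · exact key i j h
    · exact (key j i h).symm
  have hintI : ∀ ℓ ∈ Finset.Ico 1 k, IntegrableOn f (I ℓ) :=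
    fun ℓ hℓ => hint.mono_set (hIsub ℓ hℓ)
  have hunion := integral_biUnion_finset (Finset.Ico 1 k) hmeas hdisj hintI (f := f) (μ := volume)
  have hnonneg' : 0 ≤ᵐ[volume.restrict (Set.Ioo (0:ℝ) 1)] f :=
    (ae_restrict_iff' measurableSet_Ioo).2 (ae_of_all _ hnonneg)
  have hsub : (⋃ ℓ ∈ Finset.Ico 1 k, I ℓ) ⊆ Set.Ioo (0:ℝ) 1 := by
    apply Set.iUnion₂_subset hIsub
  have hmono := setIntegral_mono_set hint hnonneg' hsub.eventuallyLE
  calc (1/(k:ℝ)) * ∑ ℓ ∈ Finset.Ico 1 k, f ((ℓ:ℝ)/(k:ℝ))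
      = ∑ ℓ ∈ Finset.Ico 1 k, (1/(k:ℝ)) * f ((ℓ:ℝ)/(k:ℝ)) := Finset.mul_sum _ _ _
    _ ≤ ∑ ℓ ∈ Finset.Ico 1 k, ∫ x in I ℓ, f x := Finset.sum_le_sum hstep
    _ = ∫ x in ⋃ ℓ ∈ Finset.Ico 1 k, I ℓ, f x := hunion.symm
    _ ≤ ∫ u in Set.Ioo (0:ℝ) 1, f u := hmono


lemma midR (f : ℝ → ℝ) (hconv : ConvexOn ℝ (Set.Ioo (0:ℝ) 1) f)
    (hnonneg : ∀ x ∈ Set.Ioo (0:ℝ) 1, 0 ≤ f x)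
    (hint : IntegrableOn f (Set.Ioo (0:ℝ) 1)) (k : ℕ) (hk : 2 ≤ k) :
    ∫ x in Set.Ioo (1/(k:ℝ)) (1 - 1/(k:ℝ)), f x
      ≤ (1/(k:ℝ)) * ∑ ℓ ∈ Finset.Ico 1 k, f ((ℓ:ℝ)/(k:ℝ)) := by
  have hk0 : (0:ℝ) < k := by exact_mod_cast (by omega : 0 < k)
  set J : ℕ → Set ℝ := fun ℓ => Set.Ioc ((ℓ:ℝ)/k) (((ℓ:ℝ)+1)/k) with hJ
  -- endpoints facts for ℓ ∈ Ico 1 (k-1)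
  have hend : ∀ ℓ ∈ Finset.Ico 1 (k-1), (0:ℝ) < (ℓ:ℝ)/k ∧ (ℓ:ℝ)/k < ((ℓ:ℝ)+1)/k ∧ ((ℓ:ℝ)+1)/k < 1 := by
    intro ℓ hℓ
    obtain ⟨h1, h2⟩ := Finset.mem_Ico.1 hℓ
    have h1' : (1:ℝ) ≤ ℓ := by exact_mod_cast h1
    have h2' : (ℓ:ℝ) + 2 ≤ k := by
      have : ℓ + 2 ≤ k := by omega
      exact_mod_cast this
    refine ⟨div_pos (by linarith) hk0, (div_lt_div_iff_of_pos_right hk0).2 (by linarith), ?_⟩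
    rw [div_lt_one hk0]; linarith
  have hJsub : ∀ ℓ ∈ Finset.Ico 1 (k-1), J ℓ ⊆ Set.Ioo (0:ℝ) 1 := by
    intro ℓ hℓ x hx
    obtain ⟨e0, _, e2⟩ := hend ℓ hℓ
    exact ⟨e0.trans hx.1, lt_of_le_of_lt hx.2 e2⟩
  -- subset of union
  have hcover : Set.Ioo (1/(k:ℝ)) (1 - 1/(k:ℝ)) ⊆ ⋃ ℓ ∈ Finset.Ico 1 (k-1), J ℓ := by
    intro x hx
    have hx1 : 1 < x * k := by
      have := hx.1
      rw [div_lt_iff₀ hk0] at this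
      linarith [this]
    have hx2 : x * k < k - 1 := by
      have := hx.2
      have hxk : x * k < (1 - 1/(k:ℝ)) * k := by
        exact mul_lt_mul_of_pos_right this hk0
      have : (1 - 1/(k:ℝ)) * k = k - 1 := by field_simp
      linarith
    set m : ℕ := ⌈x * k⌉₊ with hm
    have hx0 : (0:ℝ) ≤ x * k := by nlinarith [hx.1, hk0, hx1]
    have hm2 : 2 ≤ m := by
      have : 1 < m := Nat.lt_ceil.2 (by exact_mod_cast hx1)
      omega
    have hmk : m ≤ k - 1 := by
      apply Nat.ceil_le.2
      have : ((k-1:ℕ):ℝ) = (k:ℝ) - 1 := by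
        rw [Nat.cast_sub (by omega)]; norm_num
      rw [this]; linarith
    have hlm : (1:ℕ) ≤ m - 1 := by omega
    refine Set.mem_biUnion (Finset.mem_Ico.2 ⟨hlm, by omega⟩) ?_
    have hcast : ((m-1:ℕ):ℝ) = (m:ℝ) - 1 := by
      rw [Nat.cast_sub (by omega)]; norm_num
    constructor
    · rw [hcast, div_lt_iff₀ hk0]
      have : (m:ℝ) < x * k + 1 := by
        have := Nat.ceil_lt_add_one hx0
        rw [← hm] at this
        linarith
      linarith
    · rw [hcast]
      rw [show (m:ℝ) - 1 + 1 = (m:ℝ) by ring, le_div_iff₀ hk0]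
      exact Nat.le_ceil _
  -- disjointness
  have hdisj : Set.Pairwise ↑(Finset.Ico 1 (k-1)) (Function.onFun Disjoint J) := by
    intro i hi j hj hij
    have key : ∀ i j : ℕ, i < j → Disjoint (J i) (J j) := by
      intro i j hlt
      rw [hJ]
      apply Set.Ioc_disjoint_Ioc.2
      have hij' : ((i:ℝ)+1)/k ≤ (j:ℝ)/k := by
        apply div_le_div_of_nonneg_right ?_ hk0.le |>.trans_eq rfl
        exact_mod_cast hlt
      calc min (((i:ℝ)+1)/k) (((j:ℝ)+1)/k) ≤ ((i:ℝ)+1)/k := min_le_left _ _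
        _ ≤ (j:ℝ)/k := hij'
        _ ≤ max ((i:ℝ)/k) ((j:ℝ)/k) := le_max_right _ _
    rcases lt_or_gt_of_ne hij with h | h
    · exact key i j h
    · exact (key j i h).symm
  have hmeas : ∀ ℓ ∈ Finset.Ico 1 (k-1), MeasurableSet (J ℓ) := fun ℓ _ => measurableSet_Ioc
  have hintJ : ∀ ℓ ∈ Finset.Ico 1 (k-1), IntegrableOn f (J ℓ) :=
    fun ℓ hℓ => hint.mono_set (hJsub ℓ hℓ)
  have hintU : IntegrableOn f (⋃ ℓ ∈ Finset.Ico 1 (k-1), J ℓ) :=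
    hint.mono_set (Set.iUnion₂_subset hJsub)
  have hnonneg' : 0 ≤ᵐ[volume.restrict (⋃ ℓ ∈ Finset.Ico 1 (k-1), J ℓ)] f := by
    apply (ae_restrict_iff' ((Finset.Ico 1 (k-1)).measurableSet_biUnion hmeas)).2
    exact ae_of_all _ fun x hx => by
      obtain ⟨ℓ, hℓ, hxℓ⟩ := Set.mem_iUnion₂.1 hx
      exact hnonneg x (hJsub ℓ hℓ hxℓ)
  have hmono := setIntegral_mono_set hintU hnonneg' hcover.eventuallyLE
  have hunion := integral_biUnion_finset (Finset.Ico 1 (k-1)) hmeas hdisj hintJ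
    (f := f) (μ := volume)
  -- per-interval bound
  have hstep : ∀ ℓ ∈ Finset.Ico 1 (k-1),
      (∫ x in J ℓ, f x) ≤ (f ((ℓ:ℝ)/k) + f (((ℓ:ℝ)+1)/k)) / 2 * (1/k) := by
    intro ℓ hℓ
    obtain ⟨e0, e1, e2⟩ := hend ℓ hℓ
    have := rightHH f hconv hint e0 e1 e2
    rw [hJ]
    simp only []
    rw [← integral_Ioc_eq_integral_Ioo] at this
    convert this using 2
    rw [div_sub_div_same, show ((ℓ:ℝ)+1) - ℓ = 1 by ring]
  -- sum bound
  have hsum : ∑ ℓ ∈ Finset.Ico 1 (k-1), (f ((ℓ:ℝ)/k) + f (((ℓ:ℝ)+1)/k)) / 2 * (1/k)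
      ≤ (1/(k:ℝ)) * ∑ ℓ ∈ Finset.Ico 1 k, f ((ℓ:ℝ)/(k:ℝ)) := by
    have hnn : ∀ ℓ ∈ Finset.Ico 1 k, 0 ≤ f ((ℓ:ℝ)/k) := by
      intro ℓ hℓ
      obtain ⟨h1, h2⟩ := Finset.mem_Ico.1 hℓ
      apply hnonneg
      constructor
      · exact div_pos (by exact_mod_cast h1) hk0
      · rw [div_lt_one hk0]; exact_mod_cast h2
    have hA : ∑ ℓ ∈ Finset.Ico 1 (k-1), f ((ℓ:ℝ)/k) ≤ ∑ ℓ ∈ Finset.Ico 1 k, f ((ℓ:ℝ)/k) := by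
      apply Finset.sum_le_sum_of_subset_of_nonneg
      · exact Finset.Ico_subset_Ico le_rfl (Nat.sub_le k 1)
      · intro ℓ hℓ _; exact hnn ℓ hℓ
    have hBeq : ∑ ℓ ∈ Finset.Ico 1 (k-1), f (((ℓ:ℝ)+1)/k) = ∑ ℓ ∈ Finset.Ico 2 k, f ((ℓ:ℝ)/k) := by
      rw [show Finset.Ico 2 k = Finset.map (addRightEmbedding 1) (Finset.Ico 1 (k-1)) by
        rw [Finset.map_add_right_Ico]; congr 1; omega]
      rw [Finset.sum_map]
      apply Finset.sum_congr rfl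
      intro ℓ _
      simp [addRightEmbedding]
    have hB : ∑ ℓ ∈ Finset.Ico 1 (k-1), f (((ℓ:ℝ)+1)/k) ≤ ∑ ℓ ∈ Finset.Ico 1 k, f ((ℓ:ℝ)/k) := by
      rw [hBeq]
      apply Finset.sum_le_sum_of_subset_of_nonneg
      · exact Finset.Ico_subset_Ico (by omega) le_rfl
      · intro ℓ hℓ _; exact hnn ℓ hℓ
    calc ∑ ℓ ∈ Finset.Ico 1 (k-1), (f ((ℓ:ℝ)/k) + f (((ℓ:ℝ)+1)/k)) / 2 * (1/k)
        = (1/(2*k)) * ((∑ ℓ ∈ Finset.Ico 1 (k-1), f ((ℓ:ℝ)/k))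
            + ∑ ℓ ∈ Finset.Ico 1 (k-1), f (((ℓ:ℝ)+1)/k)) := by
          rw [← Finset.sum_add_distrib, Finset.mul_sum]
          apply Finset.sum_congr rfl
          intro ℓ _
          field_simp
      _ ≤ (1/(2*k)) * (2 * ∑ ℓ ∈ Finset.Ico 1 k, f ((ℓ:ℝ)/k)) := by
          apply mul_le_mul_of_nonneg_left (by linarith) (by positivity)
      _ = (1/(k:ℝ)) * ∑ ℓ ∈ Finset.Ico 1 k, f ((ℓ:ℝ)/(k:ℝ)) := by
          field_simp
  calc ∫ x in Set.Ioo (1/(k:ℝ)) (1 - 1/(k:ℝ)), f x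
      ≤ ∫ x in ⋃ ℓ ∈ Finset.Ico 1 (k-1), J ℓ, f x := hmono
    _ = ∑ ℓ ∈ Finset.Ico 1 (k-1), ∫ x in J ℓ, f x := hunion
    _ ≤ ∑ ℓ ∈ Finset.Ico 1 (k-1), (f ((ℓ:ℝ)/k) + f (((ℓ:ℝ)+1)/k)) / 2 * (1/k) :=
        Finset.sum_le_sum hstep
    _ ≤ _ := hsum

lemma tendstoT (f : ℝ → ℝ) (hint : IntegrableOn f (Set.Ioo (0:ℝ) 1)) :
    Tendsto (fun k : ℕ => ∫ x in Set.Ioo (1/(k:ℝ)) (1 - 1/(k:ℝ)), f x) atTop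
      (nhds (∫ u in Set.Ioo (0:ℝ) 1, f u)) := by
  set s : ℕ → Set ℝ := fun n => Set.Ioo (1/((n:ℝ)+2)) (1 - 1/((n:ℝ)+2)) with hs
  have hmono : Monotone s := by
    intro n m hnm
    have h1 : (1:ℝ)/((m:ℝ)+2) ≤ 1/((n:ℝ)+2) := by
      apply one_div_le_one_div_of_le (by positivity)
      have : (n:ℝ) ≤ m := by exact_mod_cast hnm
      linarith
    exact Set.Ioo_subset_Ioo h1 (by linarith)
  have hU : (⋃ n, s n) = Set.Ioo (0:ℝ) 1 := by
    apply Set.Subset.antisymm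
    · apply Set.iUnion_subset
      intro n x hx
      have h0 : (0:ℝ) < 1/((n:ℝ)+2) := by positivity
      exact ⟨h0.trans hx.1, by linarith [hx.2, h0]⟩
    · intro x hx
      obtain ⟨n, hn⟩ := exists_nat_one_div_lt (lt_min hx.1 (by linarith [hx.2] : (0:ℝ) < 1 - x))
      refine Set.mem_iUnion.2 ⟨n, ?_, ?_⟩
      · have : (1:ℝ)/((n:ℝ)+2) ≤ 1/((n:ℝ)+1) := by
          apply one_div_le_one_div_of_le (by positivity) (by linarith)
        exact lt_of_le_of_lt this (hn.trans_le (min_le_left _ _))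
      · have h2 : (1:ℝ)/((n:ℝ)+2) ≤ 1/((n:ℝ)+1) := by
          apply one_div_le_one_div_of_le (by positivity) (by linarith)
        have := hn.trans_le (min_le_right _ _)
        linarith
  have hfi : IntegrableOn f (⋃ n, s n) := by rw [hU]; exact hint
  have hkey := tendsto_setIntegral_of_monotone (fun n => measurableSet_Ioo) hmono hfi
  rw [hU] at hkey
  have : (fun k : ℕ => ∫ x in Set.Ioo (1/(k:ℝ)) (1 - 1/(k:ℝ)), f x) ∘ (· + 2)
      = fun n : ℕ => ∫ x in s n, f x := by
    funext n
    simp only [Function.comp_apply, hs]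
    norm_num
  apply (tendsto_add_atTop_iff_nat 2).1
  convert hkey using 2 with n
  push_cast
  norm_num

theorem stmt_7 (f : ℝ → ℝ)
    (hconv : ConvexOn ℝ (Set.Ioo (0:ℝ) 1) f)
    (hnonneg : ∀ x ∈ Set.Ioo (0:ℝ) 1, 0 ≤ f x)
    (hsym : ∀ x ∈ Set.Ioo (0:ℝ) 1, f (1 - x) = f x)
    (hint : IntegrableOn f (Set.Ioo (0:ℝ) 1)) :
    (∀ k : ℕ, 2 ≤ k →
      (1/2) * f (1/2) ≤ (1/(k:ℝ)) * ∑ ℓ ∈ Finset.Ico 1 k, f ((ℓ:ℝ)/(k:ℝ)) ∧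
      (1/(k:ℝ)) * ∑ ℓ ∈ Finset.Ico 1 k, f ((ℓ:ℝ)/(k:ℝ)) ≤ ∫ u in Set.Ioo (0:ℝ) 1, f u) ∧
    Tendsto (fun k : ℕ => (1/(k:ℝ)) * ∑ ℓ ∈ Finset.Ico 1 k, f ((ℓ:ℝ)/(k:ℝ))) atTop
      (nhds (∫ u in Set.Ioo (0:ℝ) 1, f u)) ∧
    IsLeast {x : ℝ | ∃ k : ℕ, 2 ≤ k ∧
        x = (1/(k:ℝ)) * ∑ ℓ ∈ Finset.Ico 1 k, f ((ℓ:ℝ)/(k:ℝ))} ((1/2) * f (1/2)) ∧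
    (1/(2:ℝ)) * ∑ ℓ ∈ Finset.Ico (1:ℕ) 2, f ((ℓ:ℝ)/(2:ℝ)) = (1/2) * f (1/2) := by
  have part5 : (1/(2:ℝ)) * ∑ ℓ ∈ Finset.Ico (1:ℕ) 2, f ((ℓ:ℝ)/(2:ℝ)) = (1/2) * f (1/2) := by
    rw [Finset.sum_Ico_eq_sum_range]
    norm_num
  refine ⟨fun k hk => ⟨lowerR f hconv hnonneg hsym k hk, upperR f hconv hnonneg hint k hk⟩,
    ?_, ⟨⟨2, le_refl 2, ?_⟩, ?_⟩, part5⟩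
  · apply tendsto_of_tendsto_of_tendsto_of_le_of_le' (tendstoT f hint) tendsto_const_nhds
    · exact eventually_atTop.2 ⟨2, fun k hk => midR f hconv hnonneg hint k hk⟩
    · exact eventually_atTop.2 ⟨2, fun k hk => upperR f hconv hnonneg hint k hk⟩
  · rw [← part5]; norm_num
  · rintro x ⟨k, hk, rfl⟩
    exact lowerR f hconv hnonneg hsym k hk
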